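/- Let u_1,...,u_K : Δ(Z) → ℝ be affine functionals on lotteries over a finite set Z such that no u_k is a positive affine transformation of any u_l for k ≠ l, and each u_k is non-constant. Then there exist lotteries p_1,...,p_K ∈ Δ(Z) with u_k(p_k) > u_k(p_l) for all distinct k,l. (Separation property for lotteries.) -/

import Mathlib

open Finset

/-- Separation property for lotteries: given expected-utility functionals on `Δ(Z)`
(represented by Bernoulli utilities `u k : Z → ℝ`), each non-constant and no two of
which are positive affine transformations of one another, there are lotteries `p_k`
with `u_k(p_k) > u_k(p_l)` for all distinct `k, l`. -/
theorem separation_property_for_lotteries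
    {Z : Type*} [Fintype Z] (K : ℕ) (u : Fin K → Z → ℝ)
    (hnc : ∀ k, ∃ z z' : Z, u k z ≠ u k z')
    (hdist : ∀ k l, k ≠ l →
      ¬ ∃ a : ℝ, 0 < a ∧ ∃ b : ℝ, ∀ z, u k z = a * u l z + b) :
    ∃ p : Fin K → Z → ℝ,
      (∀ k, (∀ z, 0 ≤ p k z) ∧ (∑ z, p k z) = 1) ∧
      ∀ k l, k ≠ l → (∑ z, p l z * u k z) < (∑ z, p k z * u k z) := by
  rcases Nat.eq_zero_or_pos K with hK | hK
  · subst hK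
    exact ⟨fun k => k.elim0, fun k => k.elim0, fun k => k.elim0⟩
  obtain ⟨z0, _, _⟩ := hnc ⟨0, hK⟩
  haveI : Nonempty Z := ⟨z0⟩
  set n : ℝ := (Fintype.card Z : ℝ) with hn
  have hn0 : (0:ℝ) < n := by
    rw [hn]; exact_mod_cast Fintype.card_pos
  set m : Fin K → ℝ := fun k => (∑ z, u k z) / n with hm
  set v : Fin K → Z → ℝ := fun k z => u k z - m k with hv
  have hvsum : ∀ k, ∑ z, v k z = 0 := by
    intro k
    simp only [hv, Finset.sum_sub_distrib, Finset.sum_const, Finset.card_univ, nsmul_eq_mul, hm]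
    field_simp [hn]
    rw [← hn]; ring
  have hS : ∀ k, 0 < ∑ z, (v k z)^2 := by
    intro k
    obtain ⟨z, z', hzz⟩ := hnc k
    have hne : v k z ≠ 0 ∨ v k z' ≠ 0 := by
      by_contra h
      push_neg at h
      have h1 : u k z = m k := by have := h.1; simp only [hv, sub_eq_zero] at this; exact this
      have h2 : u k z' = m k := by have := h.2; simp only [hv, sub_eq_zero] at this; exact this
      exact hzz (h1.trans h2.symm)
    apply Finset.sum_pos' (fun z _ => sq_nonneg _)
    rcases hne with h | h
    · exact ⟨z, Finset.mem_univ _, by positivity⟩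
    · exact ⟨z', Finset.mem_univ _, by positivity⟩
  set N : Fin K → ℝ := fun k => Real.sqrt (∑ z, (v k z)^2) with hN
  have hNpos : ∀ k, 0 < N k := fun k => Real.sqrt_pos.2 (hS k)
  set w : Fin K → Z → ℝ := fun k z => v k z / N k with hw
  have hwsum : ∀ k, ∑ z, w k z = 0 := by
    intro k
    simp only [hw, ← Finset.sum_div, hvsum k, zero_div]
  have hwsq : ∀ k, ∑ z, (w k z)^2 = 1 := by
    intro k
    have h1 : ∑ z, (w k z)^2 = (∑ z, (v k z)^2) / (N k)^2 := by
      simp only [hw, div_pow, ← Finset.sum_div]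
    rw [h1, hN, Real.sq_sqrt (le_of_lt (hS k)), div_self (ne_of_gt (hS k))]
  have hwbd : ∀ k z, -1 ≤ w k z := by
    intro k z
    have h1 : (w k z)^2 ≤ 1 := by
      rw [← hwsq k]
      exact Finset.single_le_sum (f := fun z => (w k z)^2) (fun z _ => sq_nonneg _)
        (Finset.mem_univ z)
    nlinarith
  have hNw : ∀ j z, N j * w j z = v j z := by
    intro j z
    simp only [hw]
    rw [mul_comm, div_mul_cancel₀ _ (ne_of_gt (hNpos j))]
  have hexp2 : ∀ k l : Fin K, ∑ z, (w l z - w k z)^2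
      = (∑ z, (w l z)^2) - 2 * (∑ z, w l z * w k z) + (∑ z, (w k z)^2) := by
    intro k l
    have h : ∀ z : Z, (w l z - w k z)^2
        = (w l z)^2 - 2 * (w l z * w k z) + (w k z)^2 := fun z => by ring
    rw [Finset.sum_congr rfl (fun z _ => h z), Finset.sum_add_distrib,
      Finset.sum_sub_distrib, ← Finset.mul_sum]
  set ε : ℝ := 1 / (2 * n) with hε
  have hεpos : 0 < ε := by rw [hε]; positivity
  have hεn : ε * (2 * n) = 1 := by rw [hε]; field_simp
  refine ⟨fun k z => 1/n + ε * w k z, ?_, ?_⟩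
  · intro k
    constructor
    · intro z
      have h1 : (1/n) * n = 1 := by field_simp
      nlinarith [hwbd k z, mul_le_mul_of_nonneg_left (hwbd k z) (le_of_lt hεpos)]
    · rw [Finset.sum_add_distrib, ← Finset.mul_sum, hwsum k, mul_zero, add_zero,
        Finset.sum_const, Finset.card_univ, nsmul_eq_mul]
      rw [← hn]; field_simp
  · intro k l hkl
    -- reduce to comparing ∑ w j z * u k z
    have hexp : ∀ j, (∑ z, (1/n + ε * w j z) * u k z)
        = (∑ z, (1/n) * u k z) + ε * (N k * ∑ z, w j z * w k z) := by
      intro j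
      have h1 : ∀ z, (1/n + ε * w j z) * u k z
          = (1/n) * u k z + ε * (w j z * u k z) := by intro z; ring
      simp only [h1, Finset.sum_add_distrib, ← Finset.mul_sum]
      congr 1
      congr 1
      have h2 : ∀ z, w j z * u k z = w j z * v k z + m k * w j z := by
        intro z; simp only [hv]; ring
      rw [Finset.sum_congr rfl (fun z _ => h2 z), Finset.sum_add_distrib,
        ← Finset.mul_sum, hwsum j, mul_zero, add_zero, Finset.mul_sum]
      refine Finset.sum_congr rfl (fun z _ => ?_)
      rw [← hNw k z]; ring
    rw [hexp k, hexp l]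
    have hkk : ∑ z, w k z * w k z = 1 := by
      rw [← hwsq k]; exact Finset.sum_congr rfl (fun z _ => (sq (w k z)).symm ▸ by ring)
    have hle : ∑ z, w l z * w k z ≤ 1 := by
      have h0 : (0:ℝ) ≤ ∑ z, (w l z - w k z)^2 :=
        Finset.sum_nonneg (fun z _ => sq_nonneg _)
      rw [hexp2 k l, hwsq k, hwsq l] at h0
      linarith
    have hlt : ∑ z, w l z * w k z < 1 := by
      rcases lt_or_eq_of_le hle with h | h
      · exact h
      · exfalso
        have h0 : ∑ z, (w l z - w k z)^2 = 0 := by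
          rw [hexp2 k l, hwsq k, hwsq l, h]; ring
        have heq : ∀ z, w l z = w k z := by
          intro z
          have := (Finset.sum_eq_zero_iff_of_nonneg (fun z _ => sq_nonneg (w l z - w k z))).1
            h0 z (Finset.mem_univ z)
          have : w l z - w k z = 0 := by
            have hsq := this
            nlinarith [sq_nonneg (w l z - w k z)]
          linarith
        apply hdist k l hkl
        refine ⟨N k / N l, div_pos (hNpos k) (hNpos l), m k - (N k / N l) * m l, fun z => ?_⟩
        have h1 : w l z = w k z := heq z
        have hvk : v k z = N k / N l * v l z := by
          rw [← hNw k z, ← h1]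
          simp only [hw]
          ring
        have h4 : u k z = v k z + m k := by simp only [hv]; ring
        have h5 : u l z = v l z + m l := by simp only [hv]; ring
        rw [h4, h5, hvk]
        ring
    have hNk := hNpos k
    nlinarith [mul_lt_mul_of_pos_left hlt (mul_pos hεpos hNk)]
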